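/- Let R be a Noetherian domain whose integral closure R' in its fraction field is a finite R-module, and assume that for every height-1 prime P' of R', the contraction P' ∩ R has height 1 in R. Then R', regarded as an R-module, satisfies Serre's condition S2; in particular, for every prime p ⊆ R of height ≥ 2, depth_{R_p} (R')_p ≥ 2. -/

import Mathlib

universe u
set_option synthInstance.maxHeartbeats 1000000
set_option maxHeartbeats 1000000

/-- `depthGE R J M n` : there is a weakly regular sequence on `M` of length `n` with entries
in `J`.  For a Noetherian local ring `R` and a finite module `M` with `J • M ≠ M` this says
exactly `depth_J M ≥ n` (and the zero module has depth `+∞`, so `depthGE` always holds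
for it, matching the usual convention). -/
def depthGE (R : Type u) [CommRing R] (J : Ideal R)
    (M : Type u) [AddCommGroup M] [Module R M] (n : ℕ) : Prop :=
  ∃ rs : List R, rs.length = n ∧ (∀ r ∈ rs, r ∈ J) ∧
    RingTheory.Sequence.IsWeaklyRegular M rs

/-- The (Krull) dimension of a module: `dim (R / ann M)`. -/
noncomputable def moduleKrullDim (R : Type u) [CommRing R]
    (M : Type u) [AddCommGroup M] [Module R M] : WithBot ℕ∞ :=
  ringKrullDim (R ⧸ Module.annihilator R M)

/-- Serre's condition `S2` for a finite module over a Noetherian ring: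
`depth_{R_p} M_p ≥ min (2, dim M_p)` for every prime `p` in the support of `M`. -/
def IsS2 (R : Type u) [CommRing R] (M : Type u) [AddCommGroup M] [Module R M] : Prop :=
  ∀ p ∈ Module.support R M, ∀ n : ℕ,
    (n : WithBot ℕ∞) ≤ min 2 (moduleKrullDim (Localization.AtPrime p.asIdeal)
        (LocalizedModule p.asIdeal.primeCompl M)) →
      depthGE (Localization.AtPrime p.asIdeal)
        (IsLocalRing.maximalIdeal (Localization.AtPrime p.asIdeal))
        (LocalizedModule p.asIdeal.primeCompl M) n

open RingTheory.Sequence Pointwise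

set_option linter.unusedSectionVars false

section Aux

/-- smul-regularity from triviality of the kernel of scalar multiplication. -/
lemma isSMulRegular_of_smul_eq_zero {R M : Type*} [Ring R] [AddCommGroup M] [Module R M]
    {r : R} (h : ∀ m : M, r • m = 0 → m = 0) : IsSMulRegular M r := by
  intro m n hmn
  have h2 : r • (m - n) = 0 := by
    simp only [smul_sub]
    rw [show r • m = r • n from hmn, sub_self]
  exact sub_eq_zero.mp (h _ h2)

/-- In a Noetherian local domain whose maximal ideal is contained in a principal ideal
generated by an element of the maximal ideal, every non-maximal prime is zero. -/
lemma prime_eq_bot_of_principal_max {B : Type u} [CommRing B] [IsDomain B] [IsNoetherianRing B]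
    [IsLocalRing B] {q : B} (hq : q ∈ IsLocalRing.maximalIdeal B)
    (hmax : IsLocalRing.maximalIdeal B ≤ Ideal.span {q})
    {P : Ideal B} (hP : P.IsPrime) (hne : P ≠ IsLocalRing.maximalIdeal B) : P = ⊥ := by
  have hPle : P ≤ IsLocalRing.maximalIdeal B := IsLocalRing.le_maximalIdeal hP.ne_top
  have hqP : q ∉ P := by
    intro hqP
    exact hne (le_antisymm hPle (hmax.trans (Ideal.span_le.mpr (by simpa using hqP))))
  have key : ∀ n : ℕ, P ≤ Ideal.span {q} ^ n := by
    intro n; induction n with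
    | zero => simp
    | succ n ih =>
      intro p hp
      rw [Ideal.span_singleton_pow] at ih ⊢
      obtain ⟨c, hc⟩ := Ideal.mem_span_singleton'.mp (ih hp)
      have hcP : c ∈ P := by
        have hmem : c * q ^ n ∈ P := hc ▸ hp
        rcases hP.mem_or_mem hmem with h | h
        · exact h
        · exact absurd (hP.mem_of_pow_mem _ h) hqP
      obtain ⟨d, hd⟩ := Ideal.mem_span_singleton'.mp (hmax (hPle hcP))
      rw [Ideal.mem_span_singleton']
      exact ⟨d, by rw [← hc, ← hd]; ring⟩
  have hspan : Ideal.span {q} ≤ IsLocalRing.maximalIdeal B :=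
    Ideal.span_le.mpr (by simpa using hq)
  have hbot : (⨅ n : ℕ, (IsLocalRing.maximalIdeal B) ^ n) = ⊥ :=
    Ideal.iInf_pow_eq_bot_of_isLocalRing _ (IsLocalRing.maximalIdeal.isMaximal B).ne_top
  refine le_bot_iff.mp ?_
  rw [← hbot, le_iInf_iff]
  intro n
  exact (key n).trans (Ideal.pow_right_mono (le_antisymm hspan hmax ▸ le_rfl) n)

/-- If `Q` is a prime of a Noetherian domain `A` admitting `q ∈ Q`, `u ∉ Q` with
`t * u ∈ q * A` for all `t ∈ Q`, then every prime strictly below `Q` is zero. -/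
lemma prime_lt_eq_bot {A : Type u} [CommRing A] [IsDomain A] [IsNoetherianRing A]
    {Q : Ideal A} (hQ : Q.IsPrime) {q u : A} (hqQ : q ∈ Q) (huQ : u ∉ Q)
    (hrel : ∀ t ∈ Q, ∃ d : A, t * u = q * d)
    {P : Ideal A} (hP : P.IsPrime) (hPQ : P < Q) : P = ⊥ := by
  haveI := hQ
  haveI : IsNoetherianRing (Localization.AtPrime Q) :=
    IsLocalization.isNoetherianRing (R := A) Q.primeCompl (Localization.AtPrime Q)
      ‹IsNoetherianRing A›
  haveI : IsDomain (Localization.AtPrime Q) :=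
    IsLocalization.isDomain_localization (M := Q.primeCompl) Q.primeCompl_le_nonZeroDivisors
  have halg : ∀ t ∈ Q, algebraMap A (Localization.AtPrime Q) t ∈ Ideal.span {algebraMap A (Localization.AtPrime Q) q} := by
    intro t ht
    obtain ⟨d, hd⟩ := hrel t ht
    have hu : IsUnit (algebraMap A (Localization.AtPrime Q) u) := IsLocalization.map_units (Localization.AtPrime Q) (⟨u, huQ⟩ : Q.primeCompl)
    have h1 : algebraMap A (Localization.AtPrime Q) t * algebraMap A (Localization.AtPrime Q) u = algebraMap A (Localization.AtPrime Q) q * algebraMap A (Localization.AtPrime Q) d := by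
      rw [← map_mul, ← map_mul, hd]
    have h3 : (algebraMap A (Localization.AtPrime Q) u) * ↑hu.unit⁻¹ = 1 := by
      exact hu.mul_val_inv
    rw [Ideal.mem_span_singleton']
    refine ⟨algebraMap A (Localization.AtPrime Q) d * ↑hu.unit⁻¹, ?_⟩
    calc algebraMap A (Localization.AtPrime Q) d * ↑hu.unit⁻¹ * algebraMap A (Localization.AtPrime Q) q
        = (algebraMap A (Localization.AtPrime Q) q * algebraMap A (Localization.AtPrime Q) d) * ↑hu.unit⁻¹ := by ring
      _ = (algebraMap A (Localization.AtPrime Q) t * algebraMap A (Localization.AtPrime Q) u) * ↑hu.unit⁻¹ := by rw [h1]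
      _ = algebraMap A (Localization.AtPrime Q) t * ((algebraMap A (Localization.AtPrime Q) u) * ↑hu.unit⁻¹) := by ring
      _ = algebraMap A (Localization.AtPrime Q) t := by rw [h3, mul_one]
  have hle : IsLocalRing.maximalIdeal (Localization.AtPrime Q) ≤ Ideal.span {algebraMap A (Localization.AtPrime Q) q} := by
    rw [← Localization.AtPrime.map_eq_maximalIdeal, Ideal.map_le_iff_le_comap]
    intro t ht
    exact halg t ht
  have hqm : algebraMap A (Localization.AtPrime Q) q ∈ IsLocalRing.maximalIdeal (Localization.AtPrime Q) := by
    rw [← Localization.AtPrime.map_eq_maximalIdeal]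
    exact Ideal.mem_map_of_mem _ hqQ
  have hdisj : Disjoint (Q.primeCompl : Set A) (P : Set A) :=
    Set.disjoint_left.mpr fun a ha hb => ha (hPQ.le hb)
  set e := IsLocalization.orderIsoOfPrime Q.primeCompl (Localization.AtPrime Q) with he
  set J := e.symm ⟨P, hP, hdisj⟩ with hJdef
  have hJ : Ideal.comap (algebraMap A (Localization.AtPrime Q)) J.1 = P := by
    have := e.apply_symm_apply ⟨P, hP, hdisj⟩
    exact congrArg Subtype.val this
  rcases eq_or_ne J.1 (IsLocalRing.maximalIdeal (Localization.AtPrime Q)) with h | h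
  · exfalso
    rw [h] at hJ
    change Ideal.under A (IsLocalRing.maximalIdeal (Localization.AtPrime Q)) = P at hJ
    rw [Localization.AtPrime.under_maximalIdeal] at hJ
    exact hPQ.ne' hJ
  · have hJbot : J.1 = ⊥ := prime_eq_bot_of_principal_max hqm hle J.2 h
    rw [hJbot] at hJ
    rw [← hJ]
    have hinj : Function.Injective (algebraMap A (Localization.AtPrime Q)) :=
      IsLocalization.injective (Localization.AtPrime Q) Q.primeCompl_le_nonZeroDivisors
    refine le_bot_iff.mp fun t ht => ?_
    rw [Ideal.mem_comap, Ideal.mem_bot] at ht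
    rw [Submodule.mem_bot]
    exact hinj (by rw [ht, map_zero])

/-- membership in `x • ⊤`. -/
lemma mem_smul_top_iff' {R M : Type*} [CommRing R] [AddCommGroup M] [Module R M]
    (x : R) (m : M) : m ∈ x • (⊤ : Submodule R M) ↔ ∃ n : M, x • n = m := by
  rw [← SetLike.mem_coe, Submodule.coe_pointwise_smul]
  constructor
  · rintro ⟨n, -, rfl⟩; exact ⟨n, rfl⟩
  · rintro ⟨n, rfl⟩; exact ⟨n, trivial, rfl⟩

/-- `x` acts regularly on the localized module, given a torsion-freeness condition. -/
lemma isSMulRegular_localizedModule {R : Type u} [CommRing R] {S : Submonoid R}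
    {M : Type u} [AddCommGroup M] [Module R M] {x : R}
    (h : ∀ c : S, ∀ m : M, ((c : R) * x) • m = 0 → m = 0) :
    IsSMulRegular (LocalizedModule S M) x := by
  apply isSMulRegular_of_smul_eq_zero
  intro m hm
  induction m using LocalizedModule.induction_on with
  | h a s =>
    rw [LocalizedModule.smul'_mk, ← LocalizedModule.zero_mk s, LocalizedModule.mk_eq] at hm
    obtain ⟨c, hc⟩ := hm
    rw [smul_zero, smul_zero] at hc
    rw [Submonoid.smul_def, Submonoid.smul_def] at hc
    have hc' : ((((c * s : S) : R)) * x) • a = 0 := by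
      have e : (((c * s : S) : R)) * x = (c : R) * ((s : R) * x) := by push_cast; ring
      rw [e, mul_smul, mul_smul]
      exact hc
    have ha : a = 0 := h (c * s) a hc'
    rw [ha, LocalizedModule.zero_mk]

/-- The key quotient-regularity transfer for localized modules. -/
lemma smul_top_mem_of_localizedModule {R : Type u} [CommRing R] {S : Submonoid R}
    {M : Type u} [AddCommGroup M] [Module R M] {x y : R}
    (h : ∀ c : S, ∀ a b : M, (((c : R)) * y) • a = x • b → ∃ d : M, ((c : R)) • a = x • d) :
    ∀ m : LocalizedModule S M, y • m ∈ x • (⊤ : Submodule R (LocalizedModule S M)) →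
      m ∈ x • (⊤ : Submodule R (LocalizedModule S M)) := by
  intro m hm
  induction m using LocalizedModule.induction_on with
  | h a s =>
    rw [mem_smul_top_iff'] at hm ⊢
    obtain ⟨n, hn⟩ := hm
    induction n using LocalizedModule.induction_on with
    | h b t =>
      rw [LocalizedModule.smul'_mk, LocalizedModule.smul'_mk, LocalizedModule.mk_eq] at hn
      obtain ⟨c, hc⟩ := hn
      -- hc : c • s • (x • b) = c • t • (y • a)
      rw [Submonoid.smul_def, Submonoid.smul_def, Submonoid.smul_def, Submonoid.smul_def] at hc
      -- hc : ↑c • ↑s • x • b = ↑c • ↑t • y • a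
      have hc' : (((c * t : S) : R) * y) • a = x • (((c * s : S) : R) • b) := by
        have e1 : (((c * t : S) : R) * y) • a = (c : R) • ((t : R) • (y • a)) := by
          push_cast
          rw [mul_smul, mul_smul]
        have e2 : x • ((((c * s : S) : R)) • b) = (c : R) • ((s : R) • (x • b)) := by
          push_cast
          rw [smul_smul, smul_smul, smul_smul]
          congr 1
          ring
        rw [e1, e2]
        exact hc.symm
      obtain ⟨d, hd⟩ := h (c * t) a (((c * s : S) : R) • b) hc'
      refine ⟨LocalizedModule.mk d ((c * t) * s), ?_⟩
      rw [LocalizedModule.smul'_mk, ← hd, ← Submonoid.smul_def,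
        LocalizedModule.mk_cancel_common_left]

/-- regularity on a quotient module from an ideal-theoretic condition. -/
lemma isSMulRegular_quotient {R M : Type*} [CommRing R] [AddCommGroup M] [Module R M]
    {y : R} {N : Submodule R M} (h : ∀ m : M, y • m ∈ N → m ∈ N) :
    IsSMulRegular (M ⧸ N) y := by
  intro m1 m2 hm
  obtain ⟨a, rfl⟩ := Submodule.Quotient.mk_surjective N m1
  obtain ⟨b, rfl⟩ := Submodule.Quotient.mk_surjective N m2
  have hm' : y • a - y • b ∈ N := by
    rw [← Submodule.Quotient.eq]
    exact hm
  rw [Submodule.Quotient.eq]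
  exact h (a - b) (by rw [smul_sub]; exact hm')

end Aux

section Main

variable (R : Type u) [CommRing R] [IsDomain R] [IsNoetherianRing R]

local notation "K" => FractionRing R
local notation "A" => integralClosure R (FractionRing R)

lemma noethA (hfin : Module.Finite R A) : IsNoetherianRing A := by
  haveI := hfin
  haveI h : IsNoetherian R A := isNoetherian_of_isNoetherianRing_of_finite R A
  rw [isNoetherianRing_iff]
  exact isNoetherian_of_tower R h

lemma injAK : Function.Injective (algebraMap A K) := by
  intro a b h
  rw [Subalgebra.algebraMap_eq] at h
  apply Subtype.ext
  simpa using h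

lemma injRA : Function.Injective (algebraMap R A) := by
  intro a b h
  apply IsFractionRing.injective R K
  have h2 := congrArg (algebraMap A K) h
  rwa [← IsScalarTower.algebraMap_apply, ← IsScalarTower.algebraMap_apply] at h2

/-- Key lemma: any associated prime `Q` of `A/x'A` contains `x'` and has the property that
every prime strictly below it is zero. -/
lemma assoc_chain (hfin : Module.Finite R A) {x' : A} (hx' : x' ≠ 0) {Q : Ideal A}
    (hQ : IsAssociatedPrime Q ((A : Type u) ⧸ Ideal.span {x'})) :
    x' ∈ Q ∧ ∀ P : Ideal A, P.IsPrime → P < Q → P = ⊥ := by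
  haveI := noethA R hfin
  obtain ⟨hQp, m, hm⟩ := isAssociatedPrime_iff.mp hQ
  obtain ⟨y, rfl⟩ := Ideal.Quotient.mk_surjective m
  have memQ : ∀ t : A, t ∈ Q ↔ t * y ∈ Ideal.span {x'} := by
    intro t
    rw [hm, Submodule.mem_colon_singleton, Submodule.mem_bot]
    rw [show t • (Ideal.Quotient.mk (Ideal.span {x'}) y) =
      Ideal.Quotient.mk (Ideal.span {x'}) (t * y) from rfl]
    rw [Ideal.Quotient.eq_zero_iff_mem]
  have hynm : y ∉ Ideal.span {x'} := by
    intro h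
    exact hQp.ne_top ((Ideal.eq_top_iff_one _).mpr ((memQ 1).mpr (by simpa using h)))
  have x'Q : x' ∈ Q := (memQ x').mpr (Ideal.mem_span_singleton'.mpr ⟨y, by ring⟩)
  set f := algebraMap A K with hf
  have hx'K : f x' ≠ 0 := fun h => hx' (injAK R (by rw [h, map_zero]))
  set w : K := f y / f x' with hw
  have claim1 : ∀ t ∈ Q, ∃ d : A, t * y = x' * d ∧ f d = w * f t := by
    intro t ht
    obtain ⟨d, hd⟩ := Ideal.mem_span_singleton'.mp ((memQ t).mp ht)
    refine ⟨d, by rw [← hd]; ring, ?_⟩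
    have h1 : f (t * y) = f (x' * d) := by rw [← hd]; ring_nf
    rw [map_mul, map_mul] at h1
    rw [hw, div_mul_eq_mul_div, eq_div_iff hx'K]
    calc f d * f x' = f x' * f d := by ring
      _ = f t * f y := h1.symm
      _ = f y * f t := by ring
  by_cases hcase : ∀ t ∈ Q, ∀ d : A, t * y = x' * d → d ∈ Q
  · exfalso
    set N : Submodule A K := Submodule.map (Algebra.linearMap A K) Q with hN
    have hNbot : N ≠ ⊥ := by
      rw [Submodule.ne_bot_iff]
      exact ⟨f x', Submodule.mem_map_of_mem x'Q, hx'K⟩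
    have hNfg : N.FG := Submodule.FG.map _ (IsNoetherian.noetherian Q)
    have hfix : ∀ n ∈ N, w • n ∈ N := by
      rintro n hn
      obtain ⟨t, ht, rfl⟩ := Submodule.mem_map.mp hn
      obtain ⟨d, hd1, hd2⟩ := claim1 t ht
      have : w • (Algebra.linearMap A K t) = f d := by
        rw [hd2, Algebra.linearMap_apply, smul_eq_mul]
      rw [this]
      exact Submodule.mem_map_of_mem (hcase t ht d hd1)
    have hintA : IsIntegral A w := isIntegral_of_smul_mem_submodule N hNbot hNfg w hfix
    have hintR : IsIntegral R w := isIntegral_trans w hintA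
    have hmem : w ∈ A := (mem_integralClosure_iff R K).mpr hintR
    have hyx : y = x' * ⟨w, hmem⟩ := by
      apply injAK R
      rw [map_mul]
      have : f (⟨w, hmem⟩ : A) = w := rfl
      rw [this, hw, mul_div_cancel₀ _ hx'K]
    exact hynm (Ideal.mem_span_singleton'.mpr ⟨⟨w, hmem⟩, by rw [hyx]; ring⟩)
  · push_neg at hcase
    obtain ⟨t₀, ht₀, u, hu1, hu2⟩ := hcase
    have hfu : f u = w * f t₀ := by
      have h1 : f (t₀ * y) = f (x' * u) := by rw [hu1]
      rw [map_mul, map_mul] at h1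
      rw [hw, div_mul_eq_mul_div, eq_div_iff hx'K]
      calc f u * f x' = f x' * f u := by ring
        _ = f t₀ * f y := h1.symm
        _ = f y * f t₀ := by ring
    have claim2 : ∀ t ∈ Q, ∃ d : A, t * u = t₀ * d := by
      intro t ht
      obtain ⟨d, hd1, hd2⟩ := claim1 t ht
      refine ⟨d, injAK R ?_⟩
      rw [map_mul, map_mul, hfu, hd2]
      ring
    exact ⟨x'Q, fun P hP hPQ => prime_lt_eq_bot hQp ht₀ hu2 claim2 hP hPQ⟩

lemma assoc_height (hfin : Module.Finite R A) {x' : A} (hx' : x' ≠ 0) {Q : Ideal A}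
    (hQ : IsAssociatedPrime Q ((A : Type u) ⧸ Ideal.span {x'})) :
    Order.height (⟨Q, hQ.1⟩ : PrimeSpectrum A) = 1 := by
  obtain ⟨x'Q, hchain⟩ := assoc_chain R hfin hx' hQ
  have hbotp : ((⟨⊥, Ideal.bot_prime⟩ : PrimeSpectrum A)) ≤ ⟨Q, hQ.1⟩ := bot_le
  refine le_antisymm ?_ ?_
  · rw [show (1 : ℕ∞) = ((1 : ℕ) : ℕ∞) from rfl, Order.height_le_coe_iff]
    intro P₂ hlt
    have hP₂ : P₂.asIdeal = ⊥ := hchain P₂.asIdeal P₂.2 hlt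
    have : Order.height P₂ = 0 := by
      rw [Order.height_eq_zero]
      intro z hz
      have : z.asIdeal = ⊥ := le_bot_iff.mp (hP₂ ▸ hz)
      exact le_of_eq (PrimeSpectrum.ext (this.trans hP₂.symm)).symm
    rw [this]
    exact_mod_cast Nat.zero_lt_one
  · rw [ENat.one_le_iff_ne_zero]
    intro h0
    rw [Order.height_eq_zero] at h0
    have := h0 hbotp
    have hx0 : x' ∈ (⊥ : Ideal A) := this x'Q
    rw [Ideal.mem_bot] at hx0
    exact hx' hx0

/-- The set of associated primes of `A/x'A` is finite. -/
lemma assoc_finite (hfin : Module.Finite R A) {x' : A} (hx' : x' ≠ 0) :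
    {P : Ideal A | IsAssociatedPrime P ((A : Type u) ⧸ Ideal.span {x'})}.Finite := by
  haveI := noethA R hfin
  have hmin : (Ideal.span {x'}).minimalPrimes.Finite := by
    rw [Ideal.minimalPrimes_eq_comap]
    exact Set.Finite.image _ (minimalPrimes.finite_of_isNoetherianRing _)
  refine hmin.subset ?_
  intro P hP
  obtain ⟨x'P, hchain⟩ := assoc_chain R hfin hx' hP
  refine ⟨⟨hP.1, Ideal.span_le.mpr (by simpa using x'P)⟩, ?_⟩
  rintro J ⟨hJp, hJx⟩ hJP
  by_contra hnle
  have hlt : J < P := lt_of_le_of_ne hJP (fun h => hnle (le_of_eq h.symm))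
  have hJbot : J = ⊥ := hchain J hJp hlt
  have : x' ∈ (⊥ : Ideal A) := hJbot ▸ hJx (Ideal.subset_span rfl)
  rw [Ideal.mem_bot] at this
  exact hx' this

/-- Main construction: a weakly regular sequence of length 2. -/
lemma depth_two_of_height (hfin : Module.Finite R A)
    (hht : ∀ P' : PrimeSpectrum A, Order.height P' = 1 →
      Order.height (PrimeSpectrum.comap (algebraMap R A) P') = 1)
    (p : PrimeSpectrum R) (hp : 2 ≤ Order.height p) :
    depthGE (Localization.AtPrime p.asIdeal)
      (IsLocalRing.maximalIdeal (Localization.AtPrime p.asIdeal))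
      (LocalizedModule p.asIdeal.primeCompl A) 2 := by
  classical
  haveI := noethA R hfin
  -- p is not the zero ideal
  have hpbot : p.asIdeal ≠ ⊥ := by
    intro h
    have h0 : Order.height p = 0 := by
      rw [Order.height_eq_zero]
      intro z hz
      show p ≤ z
      change p.asIdeal ≤ z.asIdeal
      rw [h]
      exact bot_le
    rw [h0] at hp
    norm_num at hp
  obtain ⟨x, hxp, hx0⟩ := Submodule.exists_mem_ne_zero_of_ne_bot hpbot
  set x' : A := algebraMap R A x with hx'def
  have hx'0 : x' ≠ 0 := fun h => hx0 (injRA R (by rw [map_zero, ← hx'def, h]))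
  -- the associated primes of A/x'A
  set Ass := {P : Ideal A | IsAssociatedPrime P ((A : Type u) ⧸ Ideal.span {x'})} with hAss
  have hAssFin : Ass.Finite := assoc_finite R hfin hx'0
  -- contractions of associated primes do not contain p
  have hcomap : ∀ P ∈ Ass, ¬ (p.asIdeal ≤ P.comap (algebraMap R A)) := by
    intro P hP hle
    haveI := hP.1
    have h1 : Order.height (PrimeSpectrum.comap (algebraMap R A) ⟨P, hP.1⟩) = 1 :=
      hht _ (assoc_height R hfin hx'0 hP)
    have hle' : p ≤ PrimeSpectrum.comap (algebraMap R A) ⟨P, hP.1⟩ := hle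
    have := (Order.height_mono hle').trans_eq h1
    exact absurd (hp.trans this) (by norm_num)
  -- prime avoidance
  set C : Finset (Ideal R) :=
    (hAssFin.image (fun P => P.comap (algebraMap R A))).toFinset with hC
  have hCprime : ∀ q ∈ C, q.IsPrime := by
    intro q hq
    rw [hC, Set.Finite.mem_toFinset] at hq
    obtain ⟨P, hP, rfl⟩ := hq
    haveI := hP.1
    exact Ideal.IsPrime.comap _
  have havoid : ¬ ((p.asIdeal : Set R) ⊆ ⋃ q ∈ (C : Set (Ideal R)), ↑q) := by
    intro hsub
    obtain ⟨q, hqC, hle⟩ :=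
      (Ideal.subset_union_prime ⊤ ⊤ (fun i hi _ _ => hCprime i hi)).mp hsub
    rw [hC, Set.Finite.mem_toFinset] at hqC
    obtain ⟨P, hP, rfl⟩ := hqC
    exact hcomap P hP hle
  rw [Set.not_subset] at havoid
  obtain ⟨y, hyp, hyn⟩ := havoid
  have hynot : ∀ P ∈ Ass, algebraMap R A y ∉ P := by
    intro P hP hyP
    apply hyn
    have hmem : P.comap (algebraMap R A) ∈ (C : Set (Ideal R)) := by
      rw [hC, Set.Finite.coe_toFinset]
      exact ⟨P, hP, rfl⟩
    exact Set.mem_biUnion hmem hyP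
  -- y is regular on A/x'A
  have hyreg : ∀ c : A, (algebraMap R A y) * c ∈ Ideal.span {x'} → c ∈ Ideal.span {x'} := by
    intro c hc
    by_contra hcn
    have hne : (Ideal.Quotient.mk (Ideal.span {x'}) c) ≠ 0 := by
      rw [Ne, Ideal.Quotient.eq_zero_iff_mem]
      exact hcn
    obtain ⟨P, hPassoc, hann⟩ :=
      exists_le_isAssociatedPrime_of_isNoetherianRing (A : Type u)
        (Ideal.Quotient.mk (Ideal.span {x'}) c) hne
    refine hynot P hPassoc (hann ?_)
    rw [Submodule.mem_colon_singleton, Submodule.mem_bot]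
    rw [show (algebraMap R A y) • (Ideal.Quotient.mk (Ideal.span {x'}) c) =
      Ideal.Quotient.mk (Ideal.span {x'}) ((algebraMap R A y) * c) from rfl]
    rw [Ideal.Quotient.eq_zero_iff_mem]
    exact hc
  -- assemble the regular sequence
  refine ⟨[algebraMap R (Localization.AtPrime p.asIdeal) x,
    algebraMap R (Localization.AtPrime p.asIdeal) y], rfl, ?_, ?_⟩
  · intro r hr
    rw [← Localization.AtPrime.map_eq_maximalIdeal]
    rw [List.mem_cons, List.mem_singleton] at hr
    rcases hr with h | h <;> rw [h]
    · exact Ideal.mem_map_of_mem _ hxp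
    · exact Ideal.mem_map_of_mem _ hyp
  · have hlist : [algebraMap R (Localization.AtPrime p.asIdeal) x,
        algebraMap R (Localization.AtPrime p.asIdeal) y] =
        List.map (algebraMap R (Localization.AtPrime p.asIdeal)) [x, y] := rfl
    rw [hlist, isWeaklyRegular_map_algebraMap_iff]
    rw [isWeaklyRegular_cons_iff]
    constructor
    · -- x is regular on the localized module
      apply isSMulRegular_localizedModule
      intro c m hcm
      have hc0 : ((c : R)) * x ≠ 0 := by
        have : (c : R) ∉ p.asIdeal := c.2
        have hc : (c : R) ≠ 0 := fun h => this (h ▸ p.asIdeal.zero_mem)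
        exact mul_ne_zero hc hx0
      rw [Algebra.smul_def] at hcm
      rcases mul_eq_zero.mp hcm with h | h
      · exact absurd (injRA R (by rw [h, map_zero])) hc0
      · exact h
    · rw [isWeaklyRegular_cons_iff]
      refine ⟨?_, IsWeaklyRegular.nil _ _⟩
      apply isSMulRegular_quotient
      apply smul_top_mem_of_localizedModule
      intro c a b hab
      -- translate to the ring A
      rw [Algebra.smul_def, Algebra.smul_def] at hab
      have hab' : (algebraMap R A y) * ((algebraMap R A (c : R)) * a) = x' * b := by
        rw [hx'def, ← hab, map_mul]
        ring
      obtain ⟨d, hd⟩ := Ideal.mem_span_singleton'.mp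
        (hyreg _ (Ideal.mem_span_singleton'.mpr ⟨b, by rw [mul_comm]; exact hab'.symm⟩))
      refine ⟨d, ?_⟩
      rw [Algebra.smul_def, Algebra.smul_def, ← hd, hx'def]
      ring

lemma depth_one_of_height (hfin : Module.Finite R A)
    (p : PrimeSpectrum R) (hp : 1 ≤ Order.height p) :
    depthGE (Localization.AtPrime p.asIdeal)
      (IsLocalRing.maximalIdeal (Localization.AtPrime p.asIdeal))
      (LocalizedModule p.asIdeal.primeCompl A) 1 := by
  have hpbot : p.asIdeal ≠ ⊥ := by
    intro h
    have h0 : Order.height p = 0 := by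
      rw [Order.height_eq_zero]
      intro z hz
      change p.asIdeal ≤ z.asIdeal
      rw [h]
      exact bot_le
    rw [h0] at hp
    norm_num at hp
  obtain ⟨x, hxp, hx0⟩ := Submodule.exists_mem_ne_zero_of_ne_bot hpbot
  refine ⟨[algebraMap R (Localization.AtPrime p.asIdeal) x], rfl, ?_, ?_⟩
  · intro r hr
    rw [List.mem_singleton] at hr
    rw [hr, ← Localization.AtPrime.map_eq_maximalIdeal]
    exact Ideal.mem_map_of_mem _ hxp
  · have hlist : [algebraMap R (Localization.AtPrime p.asIdeal) x] =
        List.map (algebraMap R (Localization.AtPrime p.asIdeal)) [x] := rfl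
    rw [hlist, isWeaklyRegular_map_algebraMap_iff, isWeaklyRegular_cons_iff]
    refine ⟨?_, IsWeaklyRegular.nil _ _⟩
    apply isSMulRegular_localizedModule
    intro c m hcm
    have hc0 : ((c : R)) * x ≠ 0 := by
      have : (c : R) ∉ p.asIdeal := c.2
      have hc : (c : R) ≠ 0 := fun h => this (h ▸ p.asIdeal.zero_mem)
      exact mul_ne_zero hc hx0
    rw [Algebra.smul_def] at hcm
    rcases mul_eq_zero.mp hcm with h | h
    · exact absurd (injRA R (by rw [h, map_zero])) hc0
    · exact h

end Main

section Dim

/-- The module Krull dimension of any module over the localization at `p` is at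
most the height of `p`. -/
lemma moduleKrullDim_le_height (R : Type u) [CommRing R] (p : PrimeSpectrum R)
    (M : Type u) [AddCommGroup M] [Module (Localization.AtPrime p.asIdeal) M] :
    moduleKrullDim (Localization.AtPrime p.asIdeal) M ≤ (Order.height p : WithBot ℕ∞) := by
  refine le_trans (ringKrullDim_quotient_le _) ?_
  have hcomaple : ∀ q : PrimeSpectrum (Localization.AtPrime p.asIdeal),
      PrimeSpectrum.comap (algebraMap R (Localization.AtPrime p.asIdeal)) q ≤ p := by
    intro q r hr
    by_contra hrp
    have : IsUnit (algebraMap R (Localization.AtPrime p.asIdeal) r) :=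
      IsLocalization.map_units _ (⟨r, hrp⟩ : p.asIdeal.primeCompl)
    exact q.2.ne_top (Ideal.eq_top_of_isUnit_mem _ hr this)
  have hmono : StrictMono (PrimeSpectrum.comap
      (algebraMap R (Localization.AtPrime p.asIdeal))) := by
    intro a b hab
    refine lt_of_le_of_ne ?_ ?_
    · exact fun r hr => hab.le hr
    · intro h
      apply hab.ne
      have h' : a.asIdeal.comap (algebraMap R (Localization.AtPrime p.asIdeal)) =
          b.asIdeal.comap (algebraMap R (Localization.AtPrime p.asIdeal)) :=
        congrArg PrimeSpectrum.asIdeal h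
      have := congrArg (Ideal.map (algebraMap R (Localization.AtPrime p.asIdeal))) h'
      rw [IsLocalization.map_comap p.asIdeal.primeCompl, IsLocalization.map_comap
        p.asIdeal.primeCompl] at this
      exact PrimeSpectrum.ext this
  rw [ringKrullDim]
  haveI : Nonempty (PrimeSpectrum (Localization.AtPrime p.asIdeal)) :=
    ⟨IsLocalRing.closedPoint _⟩
  rw [Order.krullDim_eq_iSup_length]
  rw [WithBot.coe_le_coe]
  refine iSup_le ?_
  intro c
  have hlast : (c.map _ hmono).last ≤ p := by
    rw [LTSeries.last_map]
    exact hcomaple _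
  have hlen := Order.length_le_height hlast
  simpa using hlen

end Dim

/-- Let `R` be a Noetherian domain whose integral closure `R'` in its fraction field is a
finite `R`-module, such that every height-1 prime of `R'` contracts to a height-1 prime of
`R`.  Then `R'`, as an `R`-module, satisfies Serre's condition `S2`; in particular for every
prime `p ⊆ R` of height ≥ 2 one has `depth_{R_p} (R')_p ≥ 2`. -/
theorem integral_closure_isS2
    (R : Type u) [CommRing R] [IsDomain R] [IsNoetherianRing R]
    (hfin : Module.Finite R (integralClosure R (FractionRing R)))
    (hht : ∀ P' : PrimeSpectrum (integralClosure R (FractionRing R)),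
      Order.height P' = 1 →
        Order.height
          (PrimeSpectrum.comap (algebraMap R (integralClosure R (FractionRing R))) P') = 1) :
    IsS2 R (integralClosure R (FractionRing R)) ∧
      ∀ p : PrimeSpectrum R, 2 ≤ Order.height p →
        depthGE (Localization.AtPrime p.asIdeal)
          (IsLocalRing.maximalIdeal (Localization.AtPrime p.asIdeal))
          (LocalizedModule p.asIdeal.primeCompl (integralClosure R (FractionRing R))) 2 := by
  constructor
  · intro p _ n hn
    have hdim := moduleKrullDim_le_height R p
      (LocalizedModule p.asIdeal.primeCompl (integralClosure R (FractionRing R)))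
    have hnh : (n : ℕ∞) ≤ Order.height p := by
      have h1 : (n : WithBot ℕ∞) ≤ (Order.height p : WithBot ℕ∞) :=
        le_trans hn (le_trans (min_le_right _ _) hdim)
      exact_mod_cast h1
    have hn2 : n ≤ 2 := by
      have h1 : (n : WithBot ℕ∞) ≤ (2 : WithBot ℕ∞) := le_trans hn (min_le_left _ _)
      exact_mod_cast h1
    interval_cases n
    · exact ⟨[], rfl, by simp, IsWeaklyRegular.nil _ _⟩
    · exact depth_one_of_height R hfin p (by exact_mod_cast hnh)
    · exact depth_two_of_height R hfin hht p (by exact_mod_cast hnh)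
  · intro p hp
    exact depth_two_of_height R hfin hht p hp
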